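/- arXiv:1611.04725 — 2 statements merged into one kernel-verified Lean document; each statement's English description precedes it below -/
import Mathlib

section
/- Let f : ℝ³ → ℝ be harmonic, i.e. twice continuously differentiable with vanishing Laplacian on all of ℝ³. If there exists M > 0 such that f satisfies the weak-L³ bound with constant M (that is, for every h > 0 the Lebesgue measure of {x ∈ ℝ³ : |f(x)| > h} is at most M³ h⁻³), then f is identically zero. -/
open MeasureTheory

/-- The Laplacian of `f : ℝ³ → ℝ`, written as the sum of the second partial
derivatives along the coordinate directions. -/
noncomputable def laplacian3 (f : EuclideanSpace ℝ (Fin 3) → ℝ)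
    (x : EuclideanSpace ℝ (Fin 3)) : ℝ :=
  ∑ i : Fin 3,
    fderiv ℝ (fun y => fderiv ℝ f y (EuclideanSpace.single i (1 : ℝ))) x
      (EuclideanSpace.single i (1 : ℝ))

open Set Metric
open scoped ENNReal

local notation "E3" => EuclideanSpace ℝ (Fin 3)

noncomputable def bump : ContDiffBump (0 : E3) := ⟨1, 2, one_pos, one_lt_two⟩

lemma bump_smooth : ContDiff ℝ (↑(⊤:ℕ∞)) (⇑bump) := bump.contDiff

lemma bump_k : ∃ K : ℝ, 0 ≤ K ∧ ∀ y : E3, ‖fderiv ℝ (⇑bump) y‖ ≤ K := by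
  obtain ⟨K, hK⟩ := (bump.hasCompactSupport.fderiv (𝕜 := ℝ)).exists_bound_of_continuous
    (bump_smooth.continuous_fderiv (by simp))
  exact ⟨K, le_trans (norm_nonneg _) (hK 0), hK⟩

noncomputable def eta (R : ℝ) (x : E3) : ℝ := bump (R⁻¹ • x)

lemma eta_contDiff {R : ℝ} : ContDiff ℝ (↑(⊤:ℕ∞)) (eta R) :=
  bump_smooth.comp (contDiff_const_smul R⁻¹)

lemma eta_fderiv {R : ℝ} (x : E3) (v : E3) :
    fderiv ℝ (eta R) x v = R⁻¹ * fderiv ℝ (⇑bump) (R⁻¹ • x) v := by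
  have h : eta R = (⇑bump) ∘ (fun y : E3 => R⁻¹ • y) := rfl
  rw [h, fderiv_comp x (bump_smooth.differentiable (by simp) _)
    ((differentiableAt_fun_id (𝕜 := ℝ) (x := x)).fun_const_smul R⁻¹)]
  have h2 : fderiv ℝ (fun y : E3 => R⁻¹ • y) x = R⁻¹ • ContinuousLinearMap.id ℝ E3 := by
    rw [fderiv_fun_const_smul differentiableAt_fun_id R⁻¹, fderiv_fun_id]
  rw [h2]
  simp [_root_.map_smul]

lemma eta_one {R : ℝ} (hR : 0 < R) {x : E3} (hx : ‖x‖ ≤ R) : eta R x = 1 := by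
  apply bump.one_of_mem_closedBall
  simp only [mem_closedBall, dist_zero_right, norm_smul, norm_inv, Real.norm_eq_abs,
    abs_of_pos hR]
  show R⁻¹ * ‖x‖ ≤ bump.rIn
  have : R⁻¹ * ‖x‖ ≤ R⁻¹ * R := by
    apply mul_le_mul_of_nonneg_left hx (by positivity)
  exact (by simpa [inv_mul_cancel₀ hR.ne'] using this : R⁻¹ * ‖x‖ ≤ 1)

lemma bump_zero {y : E3} (hy : 2 < ‖y‖) : bump y = 0 := by
  by_contra h
  have : y ∈ Function.support (⇑bump) := h
  rw [bump.support_eq] at this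
  simp only [mem_ball, dist_zero_right] at this
  have : bump.rOut = 2 := rfl
  linarith [(bump.support_eq ▸ (by exact h : y ∈ Function.support (⇑bump)) :
    y ∈ ball (0:E3) bump.rOut)]

lemma bump_fderiv_zero {y : E3} (hy : 2 < ‖y‖) : fderiv ℝ (⇑bump) y = 0 := by
  have hev : (⇑bump) =ᶠ[nhds y] (fun _ => (0:ℝ)) := by
    filter_upwards [IsOpen.mem_nhds (isOpen_lt continuous_const continuous_norm) hy] with z hz
    exact bump_zero hz
  rw [hev.fderiv_eq, fderiv_fun_const]
  rfl

lemma eta_zero {R : ℝ} (hR : 0 < R) {x : E3} (hx : 2 * R < ‖x‖) : eta R x = 0 := by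
  apply bump_zero
  rw [norm_smul, norm_inv, Real.norm_eq_abs, abs_of_pos hR]
  have h1 : R⁻¹ * (2 * R) < R⁻¹ * ‖x‖ := by
    apply mul_lt_mul_of_pos_left hx (by positivity)
  calc (2:ℝ) = R⁻¹ * (2 * R) := by field_simp
    _ < R⁻¹ * ‖x‖ := h1

lemma eta_fderiv_zero {R : ℝ} (hR : 0 < R) {x : E3} (hx : 2 * R < ‖x‖) (v : E3) :
    fderiv ℝ (eta R) x v = 0 := by
  rw [eta_fderiv, bump_fderiv_zero]
  · simp
  · rw [norm_smul, norm_inv, Real.norm_eq_abs, abs_of_pos hR]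
    have h1 : R⁻¹ * (2 * R) < R⁻¹ * ‖x‖ := by
      apply mul_lt_mul_of_pos_left hx (by positivity)
    calc (2:ℝ) = R⁻¹ * (2 * R) := by field_simp
      _ < R⁻¹ * ‖x‖ := h1

lemma sq_layercake (f : EuclideanSpace ℝ (Fin 3) → ℝ) (hc : Continuous f)
    (M : ℝ) (hM : 0 < M)
    (hweak : ∀ h : ℝ, 0 < h →
      volume {x : EuclideanSpace ℝ (Fin 3) | h < |f x|} ≤ ENNReal.ofReal (M ^ 3 / h ^ 3))
    (s₀ : ℝ) (hs₀ : 0 < s₀) (A : Set (EuclideanSpace ℝ (Fin 3))) :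
    ∫⁻ x in A, ENNReal.ofReal (f x ^ 2) ≤
      volume A * ENNReal.ofReal s₀ + ENNReal.ofReal (2 * M ^ 3 / Real.sqrt s₀) := by
  rw [lintegral_eq_lintegral_meas_lt (volume.restrict A)
    (Filter.Eventually.of_forall fun x => sq_nonneg _) (hc.pow 2).aemeasurable]
  rw [← Set.Ioc_union_Ioi_eq_Ioi hs₀.le,
    lintegral_union measurableSet_Ioi Set.Ioc_disjoint_Ioi_same]
  gcongr
  · calc ∫⁻ t in Ioc 0 s₀, (volume.restrict A) {a | t < f a ^ 2}
        ≤ ∫⁻ _ in Ioc 0 s₀, volume A := by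
          apply lintegral_mono
          intro t
          refine le_trans (measure_mono (Set.subset_univ _)) ?_
          rw [Measure.restrict_apply_univ]
      _ = volume A * ENNReal.ofReal s₀ := by
          rw [setLIntegral_const, Real.volume_Ioc, sub_zero]
  · calc ∫⁻ t in Ioi s₀, (volume.restrict A) {a | t < f a ^ 2}
        ≤ ∫⁻ t in Ioi s₀, ENNReal.ofReal (M ^ 3 * t ^ (-(3/2) : ℝ)) := by
          apply lintegral_mono_ae
          filter_upwards [ae_restrict_mem measurableSet_Ioi] with t ht
          ·
            have ht0 : 0 < t := lt_trans hs₀ ht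
            have hsub : {a | t < f a ^ 2} ⊆ {x | Real.sqrt t < |f x|} := by
              intro a ha
              have : Real.sqrt t < Real.sqrt (f a ^ 2) :=
                Real.sqrt_lt_sqrt ht0.le ha
              simpa [Real.sqrt_sq_eq_abs] using this
            have h1 : (volume.restrict A) {a | t < f a ^ 2} ≤
                volume {x | Real.sqrt t < |f x|} :=
              le_trans (Measure.restrict_le_self _) (measure_mono hsub)
            refine le_trans h1 (le_trans (hweak _ (Real.sqrt_pos.2 ht0)) ?_)
            have : M ^ 3 / Real.sqrt t ^ 3 = M ^ 3 * t ^ (-(3/2) : ℝ) := by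
              rw [Real.sqrt_eq_rpow, ← Real.rpow_natCast (t ^ (1/2 : ℝ)) 3,
                ← Real.rpow_mul ht0.le, Real.rpow_neg ht0.le, div_eq_mul_inv]
              norm_num
            rw [this]
      _ ≤ ENNReal.ofReal (2 * M ^ 3 / Real.sqrt s₀) := by
          have hint : IntegrableOn (fun t : ℝ => M ^ 3 * t ^ (-(3/2) : ℝ)) (Ioi s₀) :=
            (integrableOn_Ioi_rpow_of_lt (by norm_num) hs₀).const_mul _
          rw [← ofReal_integral_eq_lintegral_ofReal hint]
          · apply ENNReal.ofReal_le_ofReal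
            rw [MeasureTheory.integral_const_mul, integral_Ioi_rpow_of_lt (by norm_num) hs₀]
            have : -s₀ ^ (-(3/2) + 1 : ℝ) / (-(3/2) + 1) = 2 / Real.sqrt s₀ := by
              rw [Real.sqrt_eq_rpow]
              norm_num
              rw [Real.rpow_neg hs₀.le, div_eq_mul_inv]
              ring
            rw [this]
            ring_nf
            exact le_rfl
          · filter_upwards [ae_restrict_mem measurableSet_Ioi] with t ht
            have h1 : (0:ℝ) < t := lt_trans hs₀ ht
            positivity

lemma sq_ball_bound (f : EuclideanSpace ℝ (Fin 3) → ℝ) (hc : Continuous f)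
    (M : ℝ) (hM : 0 < M)
    (hweak : ∀ h : ℝ, 0 < h →
      volume {x : EuclideanSpace ℝ (Fin 3) | h < |f x|} ≤ ENNReal.ofReal (M ^ 3 / h ^ 3)) :
    ∃ C : ℝ, 0 ≤ C ∧ ∀ R : ℝ, 0 < R →
      ∫ x in Metric.closedBall (0 : EuclideanSpace ℝ (Fin 3)) (2 * R), f x ^ 2 ≤ C * R := by
  set V := (volume (Metric.ball (0 : EuclideanSpace ℝ (Fin 3)) 1)).toReal with hV
  have hV0 : 0 ≤ V := ENNReal.toReal_nonneg
  refine ⟨8 * V + 2 * M ^ 3, by positivity, fun R hR => ?_⟩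
  have hint : IntegrableOn (fun x => f x ^ 2) (Metric.closedBall 0 (2 * R)) :=
    (hc.pow 2).continuousOn.integrableOn_compact (isCompact_closedBall _ _)
  have h1 := sq_layercake f hc M hM hweak (R⁻¹ ^ 2) (by positivity)
    (Metric.closedBall 0 (2 * R))
  have hvol : volume (Metric.closedBall (0 : EuclideanSpace ℝ (Fin 3)) (2 * R)) =
      ENNReal.ofReal ((2 * R) ^ 3 * V) := by
    rw [Measure.addHaar_closedBall _ _ (by positivity), finrank_euclideanSpace_fin,
      hV, ENNReal.ofReal_mul (by positivity), ENNReal.ofReal_toReal (measure_ball_lt_top).ne]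
  rw [hvol, ← ENNReal.ofReal_mul (by positivity), ← ENNReal.ofReal_add (by positivity)
    (by positivity)] at h1
  have heq : (2 * R) ^ 3 * V * R⁻¹ ^ 2 + 2 * M ^ 3 / Real.sqrt (R⁻¹ ^ 2) =
      (8 * V + 2 * M ^ 3) * R := by
    rw [Real.sqrt_sq (by positivity)]
    field_simp
    ring
  rw [heq] at h1
  rw [← ofReal_integral_eq_lintegral_ofReal hint
    (Filter.Eventually.of_forall fun x => sq_nonneg _)] at h1
  exact (ENNReal.ofReal_le_ofReal_iff (by positivity)).1 h1

lemma caccioppoli (f : E3 → ℝ) (hf : ContDiff ℝ 2 f) (hharm : ∀ x, laplacian3 f x = 0)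
    {R : ℝ} (hR : 0 < R) :
    ∫ x : E3, ∑ i : Fin 3, (eta R x * fderiv ℝ f x (EuclideanSpace.single i (1:ℝ))) ^ 2 ≤
      4 * ∫ x : E3, f x ^ 2 *
        ∑ i : Fin 3, (fderiv ℝ (eta R) x (EuclideanSpace.single i (1:ℝ))) ^ 2 := by
  set e : Fin 3 → E3 := fun i => EuclideanSpace.single i (1:ℝ) with he
  set η : E3 → ℝ := eta R with hη
  set g : Fin 3 → E3 → ℝ := fun i y => fderiv ℝ f y (EuclideanSpace.single i (1:ℝ)) with hg
  set u : E3 → ℝ := fun x => η x * η x * f x with hu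
  have hη1 : ContDiff ℝ 1 η := eta_contDiff.of_le (by exact_mod_cast le_top)
  have hηc : Continuous η := hη1.continuous
  have hf1 : ContDiff ℝ 1 f := hf.of_le (by norm_num)
  have hdf : Differentiable ℝ f := hf1.differentiable one_ne_zero
  have hgC : ∀ i, ContDiff ℝ 1 (g i) :=
    fun i => (hf.fderiv_right (by norm_num)).clm_apply contDiff_const
  have hgd : ∀ i, Differentiable ℝ (g i) := fun i => (hgC i).differentiable one_ne_zero
  have hgc : ∀ i, Continuous (g i) := fun i => (hgC i).continuous
  have hg'c : ∀ i, Continuous (fun x => fderiv ℝ (g i) x (e i)) :=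
    fun i => ((hgC i).continuous_fderiv one_ne_zero).clm_apply continuous_const
  have huC : ContDiff ℝ 1 u := (hη1.mul hη1).mul hf1
  have hud : Differentiable ℝ u := huC.differentiable one_ne_zero
  have huc : Continuous u := huC.continuous
  have hu'c : ∀ i, Continuous (fun x => fderiv ℝ u x (e i)) :=
    fun i => (huC.continuous_fderiv one_ne_zero).clm_apply continuous_const
  have hcpt : IsCompact (closedBall (0:E3) (2*R)) := isCompact_closedBall _ _
  have hηz : ∀ x : E3, x ∉ closedBall (0:E3) (2*R) → η x = 0 := by
    intro x hx
    exact eta_zero hR (by simpa [mem_closedBall, dist_zero_right, not_le] using hx)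
  have hη'z : ∀ x : E3, x ∉ closedBall (0:E3) (2*R) → ∀ v, fderiv ℝ η x v = 0 := by
    intro x hx v
    exact eta_fderiv_zero hR (by simpa [mem_closedBall, dist_zero_right, not_le] using hx) v
  have huz : ∀ x : E3, x ∉ closedBall (0:E3) (2*R) → u x = 0 := by
    intro x hx; simp [hu, hηz x hx]
  have hKu : HasCompactSupport u := HasCompactSupport.intro hcpt huz
  -- integrability of the three kinds of products
  have int1 : ∀ i, Integrable (fun x => u x * fderiv ℝ (g i) x (e i)) := by
    intro i
    exact (huc.mul (hg'c i)).integrable_of_hasCompactSupport (hKu.mul_right)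
  have int2 : ∀ i, Integrable (fun x => fderiv ℝ u x (e i) * g i x) := by
    intro i
    exact ((hu'c i).mul (hgc i)).integrable_of_hasCompactSupport
      ((hKu.fderiv_apply (𝕜 := ℝ) (e i)).mul_right)
  have int3 : ∀ i, Integrable (fun x => u x * g i x) := by
    intro i
    exact (huc.mul (hgc i)).integrable_of_hasCompactSupport (hKu.mul_right)
  have hibp : ∀ i, ∫ x : E3, u x * fderiv ℝ (g i) x (e i) =
      - ∫ x : E3, fderiv ℝ u x (e i) * g i x := by
    intro i
    exact integral_mul_fderiv_eq_neg_fderiv_mul_of_integrable (int2 i) (int1 i) (int3 i) (fun x _ => hud x) (fun x _ => hgd i x)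
  have hsum1 : ∑ i : Fin 3, ∫ x : E3, u x * fderiv ℝ (g i) x (e i) = 0 := by
    rw [← integral_finset_sum _ (fun i _ => int1 i)]
    have : ∀ x : E3, ∑ i : Fin 3, u x * fderiv ℝ (g i) x (e i) = u x * laplacian3 f x := by
      intro x
      rw [laplacian3, Finset.mul_sum]
    calc ∫ x : E3, ∑ i : Fin 3, u x * fderiv ℝ (g i) x (e i)
        = ∫ x : E3, u x * laplacian3 f x := by
          exact congrArg _ (funext this)
      _ = 0 := by simp [hharm]
  have h0 : ∫ x : E3, ∑ i : Fin 3, fderiv ℝ u x (e i) * g i x = 0 := by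
    rw [integral_finset_sum _ (fun i _ => int2 i)]
    have : ∀ i : Fin 3, ∫ x : E3, fderiv ℝ u x (e i) * g i x =
        - ∫ x : E3, u x * fderiv ℝ (g i) x (e i) := by
      intro i; rw [hibp i, neg_neg]
    rw [Finset.sum_congr rfl (fun i _ => this i), Finset.sum_neg_distrib, hsum1, neg_zero]
  -- pointwise derivative expansion
  have hdu : ∀ (x : E3) (i : Fin 3), fderiv ℝ u x (e i) =
      η x * η x * g i x + (2 * η x * f x) * fderiv ℝ η x (e i) := by
    intro x i
    have h1 : DifferentiableAt ℝ η x := hη1.differentiable one_ne_zero x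
    have h2 : DifferentiableAt ℝ (fun y => η y * η y) x := h1.mul h1
    have : fderiv ℝ u x = (η x * η x) • fderiv ℝ f x + f x • fderiv ℝ (fun y => η y * η y) x :=
      fderiv_mul h2 (hdf x)
    rw [this, fderiv_fun_mul h1 h1]
    simp only [ContinuousLinearMap.add_apply, ContinuousLinearMap.smul_apply, smul_eq_mul, hg]
    ring
  -- the P + Q decomposition
  have hPQ : ∀ x : E3, ∑ i : Fin 3, fderiv ℝ u x (e i) * g i x =
      (∑ i : Fin 3, (η x * g i x) ^ 2) +
      ∑ i : Fin 3, (2 * η x * f x) * fderiv ℝ η x (e i) * g i x := by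
    intro x
    rw [← Finset.sum_add_distrib]
    refine Finset.sum_congr rfl fun i _ => ?_
    rw [hdu x i]; ring
  have intP : Integrable (fun x : E3 => ∑ i : Fin 3, (η x * g i x) ^ 2) := by
    apply Continuous.integrable_of_hasCompactSupport
    · exact continuous_finset_sum _ fun i _ => ((hηc.mul (hgc i)).pow 2)
    · refine HasCompactSupport.intro hcpt fun x hx => ?_
      simp [hηz x hx]
  have intQ : Integrable (fun x : E3 =>
      ∑ i : Fin 3, (2 * η x * f x) * fderiv ℝ η x (e i) * g i x) := by
    apply Continuous.integrable_of_hasCompactSupport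
    · refine continuous_finset_sum _ fun i _ => ?_
      exact (((continuous_const.mul hηc).mul hf1.continuous).mul
        ((hη1.continuous_fderiv one_ne_zero).clm_apply continuous_const)).mul (hgc i)
    · refine HasCompactSupport.intro hcpt fun x hx => ?_
      simp [hηz x hx]
  have intS : Integrable (fun x : E3 =>
      f x ^ 2 * ∑ i : Fin 3, (fderiv ℝ η x (e i)) ^ 2) := by
    apply Continuous.integrable_of_hasCompactSupport
    · exact (hf1.continuous.pow 2).mul (continuous_finset_sum _ fun i _ =>
        ((hη1.continuous_fderiv one_ne_zero).clm_apply continuous_const).pow 2)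
    · refine HasCompactSupport.intro hcpt fun x hx => ?_
      simp [hη'z x hx]
  have hport : ∫ x : E3, ((∑ i : Fin 3, (η x * g i x) ^ 2) +
      ∑ i : Fin 3, (2 * η x * f x) * fderiv ℝ η x (e i) * g i x) = 0 := by
    rw [← h0]
    exact congrArg _ (funext fun x => (hPQ x).symm)
  -- pointwise inequality and conclusion
  have hpt : ∀ x : E3, (∑ i : Fin 3, (η x * g i x) ^ 2) / 2 ≤
      2 * (f x ^ 2 * ∑ i : Fin 3, (fderiv ℝ η x (e i)) ^ 2) +
      ((∑ i : Fin 3, (η x * g i x) ^ 2) +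
        ∑ i : Fin 3, (2 * η x * f x) * fderiv ℝ η x (e i) * g i x) := by
    intro x
    rw [Finset.sum_div, Finset.mul_sum, Finset.mul_sum, ← Finset.sum_add_distrib,
      ← Finset.sum_add_distrib]
    refine Finset.sum_le_sum fun i _ => ?_
    nlinarith [sq_nonneg (η x * g i x + 2 * f x * fderiv ℝ η x (e i)),
      sq_nonneg (η x * g i x), sq_nonneg (f x * fderiv ℝ η x (e i))]
  have hmono : ∫ x : E3, (∑ i : Fin 3, (η x * g i x) ^ 2) / 2 ≤
      ∫ x : E3, (2 * (f x ^ 2 * ∑ i : Fin 3, (fderiv ℝ η x (e i)) ^ 2) +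
      ((∑ i : Fin 3, (η x * g i x) ^ 2) +
        ∑ i : Fin 3, (2 * η x * f x) * fderiv ℝ η x (e i) * g i x)) := by
    refine integral_mono (intP.div_const 2) ?_ hpt
    exact (intS.const_mul 2).add (intP.add intQ)
  have intPQ : Integrable (fun x : E3 => (∑ i : Fin 3, (η x * g i x) ^ 2) +
      ∑ i : Fin 3, (2 * η x * f x) * fderiv ℝ η x (e i) * g i x) := intP.add intQ
  have int2S : Integrable (fun x : E3 =>
      2 * (f x ^ 2 * ∑ i : Fin 3, (fderiv ℝ η x (e i)) ^ 2)) := intS.const_mul 2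
  rw [integral_div, integral_add int2S intPQ, hport,
    MeasureTheory.integral_const_mul] at hmono
  linarith

lemma eta_c1 {R : ℝ} : ContDiff ℝ 1 (eta R) := eta_contDiff.of_le (by exact_mod_cast le_top)

lemma gcont (f : E3 → ℝ) (hf : ContDiff ℝ 2 f) (i : Fin 3) :
    Continuous (fun x : E3 => fderiv ℝ f x (EuclideanSpace.single i (1:ℝ))) :=
  (((hf.fderiv_right (by norm_num)).clm_apply contDiff_const) : ContDiff ℝ 1 _).continuous

lemma etafderiv_cont {R : ℝ} (i : Fin 3) :
    Continuous (fun x : E3 => fderiv ℝ (eta R) x (EuclideanSpace.single i (1:ℝ))) :=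
  ((eta_c1 (R := R)).continuous_fderiv one_ne_zero).clm_apply continuous_const

lemma intP (f : E3 → ℝ) (hf : ContDiff ℝ 2 f) {R : ℝ} (hR : 0 < R) : Integrable (fun x : E3 =>
    ∑ i : Fin 3, (eta R x * fderiv ℝ f x (EuclideanSpace.single i (1:ℝ))) ^ 2) := by
  apply Continuous.integrable_of_hasCompactSupport
  · exact continuous_finset_sum _ fun i _ => ((eta_c1.continuous.mul (gcont f hf i)).pow 2)
  · refine HasCompactSupport.intro (isCompact_closedBall (0:E3) (2*R)) fun x hx => ?_
    have : eta R x = 0 :=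
      eta_zero hR (by simpa [mem_closedBall, dist_zero_right, not_le] using hx)
    simp [this]

lemma intS (f : E3 → ℝ) (hf : ContDiff ℝ 2 f) {R : ℝ} (hR : 0 < R) : Integrable (fun x : E3 =>
    f x ^ 2 * ∑ i : Fin 3, (fderiv ℝ (eta R) x (EuclideanSpace.single i (1:ℝ))) ^ 2) := by
  apply Continuous.integrable_of_hasCompactSupport
  · exact (hf.continuous.pow 2).mul (continuous_finset_sum _ fun i _ =>
      (etafderiv_cont i).pow 2)
  · refine HasCompactSupport.intro (isCompact_closedBall (0:E3) (2*R)) fun x hx => ?_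
    have : ∀ v, fderiv ℝ (eta R) x v = 0 :=
      eta_fderiv_zero hR (by simpa [mem_closedBall, dist_zero_right, not_le] using hx)
    simp [this]

/-- There is no nonzero harmonic function on ℝ³ satisfying a weak-L³ bound. -/
theorem stmt_0 (f : EuclideanSpace ℝ (Fin 3) → ℝ)
    (hf : ContDiff ℝ 2 f) (hharm : ∀ x, laplacian3 f x = 0)
    (M : ℝ) (hM : 0 < M)
    (hweak : ∀ h : ℝ, 0 < h →
      volume {x : EuclideanSpace ℝ (Fin 3) | h < |f x|} ≤ ENNReal.ofReal (M ^ 3 / h ^ 3)) :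
    ∀ x, f x = 0 := by
  have hc : Continuous f := hf.continuous
  have hdf : Differentiable ℝ f := (hf.of_le (by norm_num) : ContDiff ℝ 1 f).differentiable one_ne_zero
  obtain ⟨K, hK0, hK⟩ := bump_k
  obtain ⟨C, hC0, hCb⟩ := sq_ball_bound f hc M hM hweak
  -- every partial derivative vanishes identically
  have hgrad : ∀ (x₀ : E3) (i₀ : Fin 3),
      fderiv ℝ f x₀ (EuclideanSpace.single i₀ (1:ℝ)) = 0 := by
    intro x₀ i₀
    by_contra hne
    set r : ℝ := ‖x₀‖ + 1 with hr
    have hr0 : 0 < r := by positivity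
    set q : E3 → ℝ := fun x => (fderiv ℝ f x (EuclideanSpace.single i₀ (1:ℝ))) ^ 2 with hq
    have hqc : Continuous q := (gcont f hf i₀).pow 2
    set I : ℝ := ∫ x in closedBall (0:E3) r, q x with hI
    have hIpos : 0 < I := by
      rw [hI, setIntegral_pos_iff_support_of_nonneg_ae
        (Filter.Eventually.of_forall fun x => sq_nonneg _)
        (hqc.continuousOn.integrableOn_compact (isCompact_closedBall _ _))]
      have hWo : IsOpen (Function.support q ∩ ball (0:E3) r) :=
        hqc.isOpen_support.inter isOpen_ball
      have hxW : x₀ ∈ Function.support q ∩ ball (0:E3) r := by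
        constructor
        · exact pow_ne_zero 2 hne
        · simp only [mem_ball, dist_zero_right]; rw [hr]; linarith
      calc (0:ℝ≥0∞) < volume (Function.support q ∩ ball (0:E3) r) :=
            hWo.measure_pos volume ⟨x₀, hxW⟩
        _ ≤ volume (Function.support q ∩ closedBall (0:E3) r) :=
            measure_mono (inter_subset_inter_right _ ball_subset_closedBall)
    have hbound : ∀ R : ℝ, r ≤ R → I ≤ 12 * K ^ 2 * C / R := by
      intro R hrR
      have hR0 : 0 < R := lt_of_lt_of_le hr0 hrR
      -- step 1 : RHS of caccioppoli is at most 3 K² C / R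
      have hSle : ∀ x : E3,
          (∑ i : Fin 3, (fderiv ℝ (eta R) x (EuclideanSpace.single i (1:ℝ))) ^ 2) ≤
          3 * (R⁻¹ ^ 2 * K ^ 2) := by
        intro x
        have hterm : ∀ i : Fin 3,
            (fderiv ℝ (eta R) x (EuclideanSpace.single i (1:ℝ))) ^ 2 ≤ R⁻¹ ^ 2 * K ^ 2 := by
          intro i
          rw [eta_fderiv, mul_pow]
          have h1 : |fderiv ℝ (⇑bump) (R⁻¹ • x) (EuclideanSpace.single i (1:ℝ))| ≤ K := by
            have h0 := ContinuousLinearMap.le_opNorm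
              (fderiv ℝ (⇑bump) (R⁻¹ • x)) (EuclideanSpace.single i (1:ℝ))
            rw [Real.norm_eq_abs, EuclideanSpace.norm_single, norm_one, mul_one] at h0
            exact le_trans h0 (hK _)
          have h2 : (fderiv ℝ (⇑bump) (R⁻¹ • x) (EuclideanSpace.single i (1:ℝ))) ^ 2 ≤ K ^ 2 := by
            rw [← sq_abs]
            exact pow_le_pow_left₀ (abs_nonneg _) h1 2
          exact mul_le_mul_of_nonneg_left h2 (by positivity)
        calc ∑ i : Fin 3, (fderiv ℝ (eta R) x (EuclideanSpace.single i (1:ℝ))) ^ 2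
            ≤ ∑ _i : Fin 3, R⁻¹ ^ 2 * K ^ 2 := Finset.sum_le_sum fun i _ => hterm i
          _ = 3 * (R⁻¹ ^ 2 * K ^ 2) := by simp
      have hstep1 : ∫ x : E3, f x ^ 2 *
          ∑ i : Fin 3, (fderiv ℝ (eta R) x (EuclideanSpace.single i (1:ℝ))) ^ 2 ≤
          3 * K ^ 2 * C / R := by
        have hs0 : ∀ x : E3, x ∉ closedBall (0:E3) (2*R) → f x ^ 2 *
            ∑ i : Fin 3, (fderiv ℝ (eta R) x (EuclideanSpace.single i (1:ℝ))) ^ 2 = 0 := by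
          intro x hx
          have : ∀ v, fderiv ℝ (eta R) x v = 0 :=
            eta_fderiv_zero hR0 (by simpa [mem_closedBall, dist_zero_right, not_le] using hx)
          simp [this]
        rw [← setIntegral_eq_integral_of_forall_compl_eq_zero hs0]
        have hmon : ∫ x in closedBall (0:E3) (2*R), f x ^ 2 *
            ∑ i : Fin 3, (fderiv ℝ (eta R) x (EuclideanSpace.single i (1:ℝ))) ^ 2 ≤
            ∫ x in closedBall (0:E3) (2*R), f x ^ 2 * (3 * (R⁻¹ ^ 2 * K ^ 2)) := by
          refine setIntegral_mono_on ((intS f hf hR0).integrableOn)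
            (((hc.pow 2).mul continuous_const).continuousOn.integrableOn_compact
              (isCompact_closedBall _ _)) measurableSet_closedBall fun x _ => ?_
          exact mul_le_mul_of_nonneg_left (hSle x) (sq_nonneg _)
        refine le_trans hmon ?_
        rw [MeasureTheory.integral_mul_const]
        calc (∫ x in closedBall (0:E3) (2*R), f x ^ 2) * (3 * (R⁻¹ ^ 2 * K ^ 2))
            ≤ (C * R) * (3 * (R⁻¹ ^ 2 * K ^ 2)) := by
              apply mul_le_mul_of_nonneg_right (hCb R hR0) (by positivity)
          _ = 3 * K ^ 2 * C / R := by field_simp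
      -- step 2 : I is at most the LHS of caccioppoli
      have hstep2 : I ≤ ∫ x : E3,
          ∑ i : Fin 3, (eta R x * fderiv ℝ f x (EuclideanSpace.single i (1:ℝ))) ^ 2 := by
        have h1 : I ≤ ∫ x in closedBall (0:E3) r,
            ∑ i : Fin 3, (eta R x * fderiv ℝ f x (EuclideanSpace.single i (1:ℝ))) ^ 2 := by
          refine setIntegral_mono_on
            (hqc.continuousOn.integrableOn_compact (isCompact_closedBall _ _))
            ((intP f hf hR0).integrableOn) measurableSet_closedBall fun x hx => ?_
          have hxr : ‖x‖ ≤ R := by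
            rw [mem_closedBall, dist_zero_right] at hx
            linarith
          have hone : eta R x = 1 := eta_one hR0 hxr
          have : q x = (eta R x * fderiv ℝ f x (EuclideanSpace.single i₀ (1:ℝ))) ^ 2 := by
            rw [hone, one_mul]
          rw [this]
          exact Finset.single_le_sum (f := fun i =>
            (eta R x * fderiv ℝ f x (EuclideanSpace.single i (1:ℝ))) ^ 2)
            (fun i _ => sq_nonneg _) (Finset.mem_univ i₀)
        exact le_trans h1 (setIntegral_le_integral (intP f hf hR0)
          (Filter.Eventually.of_forall fun x => Finset.sum_nonneg fun i _ => sq_nonneg _))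
      calc I ≤ ∫ x : E3,
            ∑ i : Fin 3, (eta R x * fderiv ℝ f x (EuclideanSpace.single i (1:ℝ))) ^ 2 := hstep2
        _ ≤ 4 * ∫ x : E3, f x ^ 2 *
            ∑ i : Fin 3, (fderiv ℝ (eta R) x (EuclideanSpace.single i (1:ℝ))) ^ 2 :=
            caccioppoli f hf hharm hR0
        _ ≤ 4 * (3 * K ^ 2 * C / R) := by linarith [hstep1]
        _ = 12 * K ^ 2 * C / R := by ring
    have htend : Filter.Tendsto (fun R : ℝ => 12 * K ^ 2 * C / R) Filter.atTop (nhds 0) :=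
      tendsto_const_nhds.div_atTop Filter.tendsto_id
    have : I ≤ 0 := ge_of_tendsto htend (Filter.eventually_atTop.2 ⟨r, hbound⟩)
    linarith
  -- hence the full derivative vanishes
  have hfd0 : ∀ x : E3, fderiv ℝ f x = 0 := by
    intro x
    have hb : ∀ v : E3, fderiv ℝ f x v = 0 := by
      intro v
      have hrepr := (EuclideanSpace.basisFun (Fin 3) ℝ).sum_repr v
      rw [← hrepr, map_sum]
      refine Finset.sum_eq_zero fun i _ => ?_
      rw [_root_.map_smul]
      have : (EuclideanSpace.basisFun (Fin 3) ℝ) i = EuclideanSpace.single i (1:ℝ) :=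
        EuclideanSpace.basisFun_apply (Fin 3) ℝ i
      rw [this, hgrad x i, smul_zero]
    exact ContinuousLinearMap.ext hb
  have hconst : ∀ x : E3, f x = f 0 := fun x => is_const_of_fderiv_eq_zero hdf hfd0 x 0
  have hf0 : f 0 = 0 := by
    by_contra h0
    have hpos : 0 < |f 0| / 2 := by positivity
    have huniv : {x : E3 | |f 0| / 2 < |f x|} = univ := by
      ext x
      simp only [mem_setOf_eq, mem_univ, iff_true]
      rw [hconst x]
      have : 0 < |f 0| := abs_pos.2 h0
      linarith
    have := hweak (|f 0| / 2) hpos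
    rw [huniv, measure_univ_of_isAddLeftInvariant] at this
    exact (ENNReal.ofReal_lt_top).not_ge (le_of_eq (top_le_iff.1 this).symm)
  exact fun x => (hconst x).trans hf0
end

section
/- There exists an absolute constant C > 0 such that for every continuously differentiable, compactly supported function f : ℝ³ → ℝ that satisfies the weak-L³ bound with constant M > 0, one has ∫_{ℝ³} |f(x)|⁴ dx ≤ C M² ∫_{ℝ³} |∇f(x)|² dx. -/
open MeasureTheory Set
open scoped NNReal ENNReal

/-- For a C¹ compactly supported weak-L³ function,
`∫ |f|⁴ ≤ C M² ∫ |∇f|²`. -/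
theorem stmt_8 :
    ∃ C : ℝ, 0 < C ∧
      ∀ (f : EuclideanSpace ℝ (Fin 3) → ℝ),
      ContDiff ℝ 1 f → HasCompactSupport f →
      ∀ (M : ℝ), 0 < M →
      (∀ h : ℝ, 0 < h →
        volume {x : EuclideanSpace ℝ (Fin 3) | h < |f x|} ≤ ENNReal.ofReal (M ^ 3 / h ^ 3)) →
      ∫ x, |f x| ^ 4 ≤ C * M ^ 2 * ∫ x, ‖fderiv ℝ f x‖ ^ 2 := by
  set K : ℝ≥0 := SNormLESNormFDerivOfEqConst ℝ (volume : Measure (EuclideanSpace ℝ (Fin 3))) ((2:ℝ≥0):ℝ) with hKdef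
  refine ⟨6 * ((K:ℝ) + 1)^2, by positivity, ?_⟩
  intro f hf h2f M hM hweak
  have hc : Continuous f := hf.continuous
  have hc' : Continuous (fderiv ℝ f) := (hf.fderiv_right (m := 0) le_rfl).continuous
  have h2f' : HasCompactSupport (fderiv ℝ f) := h2f.fderiv ℝ
  set D : ℝ := ∫ x, ‖fderiv ℝ f x‖ ^ 2 with hDdef
  have hDnn : (0:ℝ) ≤ D := integral_nonneg fun x => sq_nonneg _
  have hDint : Integrable (fun x => ‖fderiv ℝ f x‖ ^ 2) volume :=
    ((hc'.norm.pow 2)).integrable_of_hasCompactSupport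
      (by have := h2f'.comp_left (g := fun v => ‖v‖^2) (by simp); exact this)
  have h6cont : Continuous (fun x => |f x| ^ 6) := hc.abs.pow 6
  have h6int : Integrable (fun x => |f x| ^ 6) volume :=
    h6cont.integrable_of_hasCompactSupport (by have := h2f.comp_left (g := fun v => |v|^6) (by simp); exact this)
  set n : ℝ := ∫ x, |f x| ^ 6 with hndef
  have hnn : (0:ℝ) ≤ n := integral_nonneg fun x => by positivity
  have hN : ∫⁻ x, ENNReal.ofReal (|f x| ^ 6) = ENNReal.ofReal n :=
    (ofReal_integral_eq_lintegral_ofReal h6int (ae_of_all _ fun x => by positivity)).symm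
  -- Sobolev inequality : n^(1/3) ≤ (K+1)^2 * D
  have hsob : eLpNorm f ((6:ℝ≥0):ℝ≥0∞) volume
      ≤ (K:ℝ≥0∞) * eLpNorm (fderiv ℝ f) ((2:ℝ≥0):ℝ≥0∞) volume := by
    refine eLpNorm_le_eLpNorm_fderiv_of_eq (p := 2) (p' := 6) volume hf h2f ?_ ?_ ?_
    · norm_num
    · simp
    · simp; norm_num
  have hl6 : ∫⁻ x, ((‖f x‖₊ : ℝ≥0∞)) ^ ((6:ℝ≥0):ℝ) = ENNReal.ofReal n := by
    rw [← hN]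
    refine lintegral_congr fun x => ?_
    rw [← enorm_eq_nnnorm, ← ofReal_norm, ENNReal.ofReal_rpow_of_nonneg (norm_nonneg _) (by norm_num)]
    congr 1
    rw [Real.norm_eq_abs, show (((6:ℝ≥0)):ℝ) = ((6:ℕ):ℝ) by norm_num, Real.rpow_natCast]
  have hl2 : ∫⁻ x, ((‖fderiv ℝ f x‖₊ : ℝ≥0∞)) ^ ((2:ℝ≥0):ℝ)
      = ENNReal.ofReal D := by
    rw [hDdef, ofReal_integral_eq_lintegral_ofReal hDint (ae_of_all _ fun x => sq_nonneg _)]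
    refine lintegral_congr fun x => ?_
    rw [← enorm_eq_nnnorm, ← ofReal_norm, ENNReal.ofReal_rpow_of_nonneg (norm_nonneg _) (by norm_num)]
    congr 1
    rw [show (((2:ℝ≥0)):ℝ) = ((2:ℕ):ℝ) by norm_num, Real.rpow_natCast]
  have hsob2 : (ENNReal.ofReal n) ^ ((1:ℝ)/6) ≤ (K:ℝ≥0∞) * (ENNReal.ofReal D) ^ ((1:ℝ)/2) := by
    rw [eLpNorm_nnreal_eq_lintegral (by norm_num), eLpNorm_nnreal_eq_lintegral (by norm_num)] at hsob
    simp only [enorm_eq_nnnorm] at hsob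
    rw [hl6, hl2] at hsob
    convert hsob using 3 <;> norm_num
  have key : n ^ ((1:ℝ)/3) ≤ ((K:ℝ)+1)^2 * D := by
    have h2 : (ENNReal.ofReal n) ^ ((1:ℝ)/3) ≤ (K:ℝ≥0∞)^2 * ENNReal.ofReal D := by
      calc (ENNReal.ofReal n) ^ ((1:ℝ)/3)
          = ((ENNReal.ofReal n) ^ ((1:ℝ)/6)) ^ (2:ℕ) := by
            rw [← ENNReal.rpow_natCast _ 2, ← ENNReal.rpow_mul]; norm_num
        _ ≤ ((K:ℝ≥0∞) * (ENNReal.ofReal D) ^ ((1:ℝ)/2)) ^ (2:ℕ) := by gcongr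
        _ = (K:ℝ≥0∞)^2 * ENNReal.ofReal D := by
            rw [mul_pow, ← ENNReal.rpow_natCast ((ENNReal.ofReal D) ^ ((1:ℝ)/2)) 2,
              ← ENNReal.rpow_mul]
            norm_num
    have h3 : ENNReal.ofReal (n ^ ((1:ℝ)/3)) ≤ ENNReal.ofReal ((K:ℝ)^2 * D) := by
      rw [← ENNReal.ofReal_rpow_of_nonneg hnn (by norm_num)]
      rw [ENNReal.ofReal_mul (by positivity)]
      convert h2 using 2
      rw [show ((K:ℝ)^2) = (((K^2 : ℝ≥0)):ℝ) by push_cast; ring, ENNReal.ofReal_coe_nnreal]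
      push_cast; ring
    have h4 : n ^ ((1:ℝ)/3) ≤ (K:ℝ)^2 * D :=
      le_trans (by exact_mod_cast (ENNReal.ofReal_le_ofReal_iff (by positivity)).mp h3) le_rfl
    refine h4.trans ?_
    have : (K:ℝ)^2 ≤ ((K:ℝ)+1)^2 := by nlinarith [K.coe_nonneg]
    nlinarith [K.coe_nonneg, hDnn]
  -- case n = 0
  by_cases hn0 : n = 0
  · have hz : ∫ x, |f x| ^ 6 = 0 := by rw [← hndef]; exact hn0
    have hfz : (fun x => |f x| ^ 6) =ᵐ[volume] 0 :=
      (integral_eq_zero_iff_of_nonneg (fun x => by positivity) h6int).mp hz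
    have hfe : (fun x : EuclideanSpace ℝ (Fin 3) => |f x| ^ 6) = 0 :=
      (hc.abs.pow 6).ae_eq_iff_eq volume continuous_const |>.mp hfz
    have hf0 : ∀ x, f x = 0 := by
      intro x
      have h6 : |f x| ^ 6 = 0 := congrFun hfe x
      rwa [pow_eq_zero_iff (by norm_num), abs_eq_zero] at h6
    simp only [hf0, abs_zero]
    norm_num
    exact mul_nonneg (by positivity) hDnn
  have hnpos : 0 < n := lt_of_le_of_ne hnn (Ne.symm hn0)
  -- layer cake
  have hmble : AEMeasurable (fun x => |f x|) volume := hc.abs.aemeasurable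
  have layer : ∫⁻ x, ENNReal.ofReal (|f x| ^ (4:ℝ))
      = ENNReal.ofReal 4 * ∫⁻ t in Ioi (0:ℝ),
          volume {a | t < |f a|} * ENNReal.ofReal (t ^ ((4:ℝ)-1)) :=
    lintegral_rpow_eq_lintegral_meas_lt_mul volume (ae_of_all _ fun x => abs_nonneg _) hmble
      (by norm_num)
  set u : ℝ := n ^ ((1:ℝ)/3) with hudef
  have hupos : 0 < u := Real.rpow_pos_of_pos hnpos _
  have hu3 : u ^ 3 = n := by
    rw [hudef, ← Real.rpow_natCast (n ^ ((1:ℝ)/3)) 3, ← Real.rpow_mul hnn]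
    norm_num
  set A : ℝ := u / M with hAdef
  have hA : 0 < A := by positivity
  -- Chebyshev
  have cheb : ∀ t : ℝ, 0 < t → volume {a | t < |f a|} * ENNReal.ofReal (t ^ (3:ℝ))
      ≤ ENNReal.ofReal n * ENNReal.ofReal (t ^ (-3:ℝ)) := by
    intro t ht
    have hsub : {a : EuclideanSpace ℝ (Fin 3) | t < |f a|}
        ⊆ {a | ENNReal.ofReal (t ^ 6) ≤ ENNReal.ofReal (|f a| ^ 6)} := by
      intro a ha
      exact ENNReal.ofReal_le_ofReal (pow_le_pow_left₀ ht.le (le_of_lt ha) 6)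
    have h2 := mul_meas_ge_le_lintegral₀
      (μ := volume) (f := fun x => ENNReal.ofReal (|f x| ^ 6))
      (ENNReal.measurable_ofReal.comp_aemeasurable ((hc.abs.pow 6)).aemeasurable)
      (ENNReal.ofReal (t ^ 6))
    rw [hN] at h2
    have h3 : ENNReal.ofReal (t ^ 6) * volume {a | t < |f a|} ≤ ENNReal.ofReal n :=
      le_trans (mul_le_mul_right (measure_mono hsub) _) h2
    have hsplit : ENNReal.ofReal (t ^ (3:ℝ))
        = ENNReal.ofReal (t ^ 6) * ENNReal.ofReal (t ^ (-3:ℝ)) := by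
      rw [← ENNReal.ofReal_mul (by positivity)]
      congr 1
      rw [← Real.rpow_natCast t 6, ← Real.rpow_add ht]
      norm_num
    calc volume {a | t < |f a|} * ENNReal.ofReal (t ^ (3:ℝ))
        = (ENNReal.ofReal (t ^ 6) * volume {a | t < |f a|}) * ENNReal.ofReal (t ^ (-3:ℝ)) := by
          rw [hsplit]; ring
      _ ≤ ENNReal.ofReal n * ENNReal.ofReal (t ^ (-3:ℝ)) := by gcongr
  -- split the integral
  have hsplit : ∫⁻ t in Ioi (0:ℝ), volume {a | t < |f a|} * ENNReal.ofReal (t ^ (3:ℝ))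
      = (∫⁻ t in Ioc (0:ℝ) A, volume {a | t < |f a|} * ENNReal.ofReal (t ^ (3:ℝ)))
        + ∫⁻ t in Ioi A, volume {a | t < |f a|} * ENNReal.ofReal (t ^ (3:ℝ)) := by
    rw [← Ioc_union_Ioi_eq_Ioi hA.le, lintegral_union measurableSet_Ioi (Ioc_disjoint_Ioi le_rfl)]
  have hJ1 : (∫⁻ t in Ioc (0:ℝ) A, volume {a | t < |f a|} * ENNReal.ofReal (t ^ (3:ℝ)))
      ≤ ENNReal.ofReal (M ^ 3 * A) := by
    calc (∫⁻ t in Ioc (0:ℝ) A, volume {a | t < |f a|} * ENNReal.ofReal (t ^ (3:ℝ)))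
        ≤ ∫⁻ _ in Ioc (0:ℝ) A, ENNReal.ofReal (M ^ 3) := by
          refine setLIntegral_mono' measurableSet_Ioc fun t ht => ?_
          have ht0 : 0 < t := ht.1
          calc volume {a | t < |f a|} * ENNReal.ofReal (t ^ (3:ℝ))
              ≤ ENNReal.ofReal (M ^ 3 / t ^ 3) * ENNReal.ofReal (t ^ (3:ℝ)) := by
                gcongr; exact hweak t ht.1
            _ = ENNReal.ofReal (M ^ 3) := by
                rw [← ENNReal.ofReal_mul (by positivity)]
                congr 1
                rw [show (t ^ (3:ℝ)) = t ^ (3:ℕ) by rw [← Real.rpow_natCast t 3]; norm_num]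
                field_simp
      _ = ENNReal.ofReal (M ^ 3) * volume (Ioc (0:ℝ) A) := setLIntegral_const _ _
      _ = ENNReal.ofReal (M ^ 3 * A) := by
          rw [Real.volume_Ioc, ENNReal.ofReal_mul (by positivity)]
          norm_num
  have hJ2 : (∫⁻ t in Ioi A, volume {a | t < |f a|} * ENNReal.ofReal (t ^ (3:ℝ)))
      ≤ ENNReal.ofReal (n * (A ^ (-2:ℝ) / 2)) := by
    calc (∫⁻ t in Ioi A, volume {a | t < |f a|} * ENNReal.ofReal (t ^ (3:ℝ)))
        ≤ ∫⁻ t in Ioi A, ENNReal.ofReal n * ENNReal.ofReal (t ^ (-3:ℝ)) := by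
          refine setLIntegral_mono' measurableSet_Ioi fun t ht => cheb t (hA.trans ht)
      _ = ENNReal.ofReal n * ∫⁻ t in Ioi A, ENNReal.ofReal (t ^ (-3:ℝ)) :=
          lintegral_const_mul' _ _ ENNReal.ofReal_ne_top
      _ = ENNReal.ofReal n * ENNReal.ofReal (A ^ (-2:ℝ) / 2) := by
          congr 1
          rw [← ofReal_integral_eq_lintegral_ofReal
            (integrableOn_Ioi_rpow_of_lt (by norm_num) hA)
            ((ae_restrict_iff' measurableSet_Ioi).mpr (ae_of_all _ fun t ht =>
              Real.rpow_nonneg (le_of_lt (hA.trans ht)) _))]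
          rw [integral_Ioi_rpow_of_lt (by norm_num) hA]
          norm_num
      _ = ENNReal.ofReal (n * (A ^ (-2:ℝ) / 2)) := (ENNReal.ofReal_mul hnn).symm
  -- combine
  have hLHS : ∫ x, |f x| ^ 4 = (∫⁻ x, ENNReal.ofReal (|f x| ^ (4:ℝ))).toReal := by
    rw [integral_eq_lintegral_of_nonneg_ae (f := fun x => |f x| ^ 4) (ae_of_all _ fun x => by positivity)
      ((hc.abs.pow 4)).aestronglyMeasurable]
    congr 1
    refine lintegral_congr fun x => ?_
    rw [← Real.rpow_natCast |f x| 4]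
    norm_num
  have harith : 4 * (M ^ 3 * A + n * (A ^ (-2:ℝ) / 2)) = 6 * M ^ 2 * u := by
    rw [Real.rpow_neg hA.le, hAdef]
    rw [show ((u/M) ^ (2:ℝ)) = (u/M)^(2:ℕ) by rw [← Real.rpow_natCast (u/M) 2]; norm_num]
    field_simp
    rw [← hu3]; ring
  have hfinal : (∫⁻ x, ENNReal.ofReal (|f x| ^ (4:ℝ))) ≤ ENNReal.ofReal (6 * M ^ 2 * u) := by
    rw [layer, show ((4:ℝ)-1) = (3:ℝ) by norm_num]
    calc ENNReal.ofReal 4 * ∫⁻ t in Ioi (0:ℝ), volume {a | t < |f a|} * ENNReal.ofReal (t ^ (3:ℝ))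
        ≤ ENNReal.ofReal 4 * (ENNReal.ofReal (M ^ 3 * A) + ENNReal.ofReal (n * (A ^ (-2:ℝ) / 2))) := by
          rw [hsplit]; gcongr
      _ = ENNReal.ofReal (4 * (M ^ 3 * A + n * (A ^ (-2:ℝ) / 2))) := by
          rw [← ENNReal.ofReal_add (by positivity) (by positivity),
            ← ENNReal.ofReal_mul (by norm_num)]
      _ = ENNReal.ofReal (6 * M ^ 2 * u) := by rw [harith]
  rw [hLHS]
  refine le_trans (ENNReal.toReal_le_of_le_ofReal (by positivity) hfinal) ?_
  have hkey : u ≤ ((K:ℝ)+1)^2 * D := key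
  nlinarith [hM, hupos, hkey, sq_nonneg M, hDnn]
end
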